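/- Fix a horizon M ∈ ℕ and a finite nonempty action set A. Let v_m : A → ℝ for m = 1,…,M, and define recursively: R_0(a) = 0 for all a; σ_m(a) = max(R_{m−1}(a),0) / ∑_{b∈A} max(R_{m−1}(b),0) if ∑_{b∈A} max(R_{m−1}(b),0) > 0, and σ_m(a) = 1/|A| otherwise; r_m(a) = v_m(a) − ∑_{b∈A} σ_m(b)·v_m(b); and R_m(a) = R_{m−1}(a) + r_m(a). Then ∑_{a∈A} (max(R_M(a),0))² ≤ ∑_{m=1}^{M} ∑_{a∈A} r_m(a)². -/
import Mathlib


/-- Blackwell potential bound for regret matching: under the regret-matching update, the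
sum of squared positive parts of the cumulative regrets after `M` rounds is at most the
total accumulated squared norm of the instantaneous regret vectors. -/
theorem tracer_regret_matching_potential_bound
    (M : ℕ) (A : Type*) [Fintype A] [Nonempty A]
    (v σ r R : ℕ → A → ℝ)
    (hR0 : ∀ a, R 0 a = 0)
    (hσ : ∀ m, 1 ≤ m → ∀ a, σ m a =
      if 0 < ∑ b, max (R (m - 1) b) 0
      then max (R (m - 1) a) 0 / ∑ b, max (R (m - 1) b) 0
      else 1 / (Fintype.card A : ℝ))
    (hr : ∀ m, 1 ≤ m → ∀ a, r m a = v m a - ∑ b, σ m b * v m b)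
    (hRrec : ∀ m, 1 ≤ m → ∀ a, R m a = R (m - 1) a + r m a) :
    ∑ a, (max (R M a) 0) ^ 2 ≤ ∑ m ∈ Finset.Icc 1 M, ∑ a, (r m a) ^ 2 := by
  induction M with
  | zero => simp [hR0]
  | succ M ih =>
    have hkey : ∑ a, max (R M a) 0 * r (M + 1) a = 0 := by
      by_cases hS : 0 < ∑ b, max (R M b) 0
      · have hσ' := hσ (M + 1) (by omega)
        have hr' := hr (M + 1) (by omega)
        simp only [Nat.add_sub_cancel] at hσ'
        have hC : ∑ b, σ (M + 1) b * v (M + 1) b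
            = (∑ b, max (R M b) 0 * v (M + 1) b) / (∑ b, max (R M b) 0) := by
          rw [Finset.sum_div]
          refine Finset.sum_congr rfl fun b _ => ?_
          rw [hσ' b, if_pos hS, div_mul_eq_mul_div]
        calc ∑ a, max (R M a) 0 * r (M + 1) a
            = ∑ a, (max (R M a) 0 * v (M + 1) a
                - max (R M a) 0 * ∑ b, σ (M + 1) b * v (M + 1) b) := by
              refine Finset.sum_congr rfl fun a _ => ?_
              rw [hr' a]; ring
          _ = (∑ a, max (R M a) 0 * v (M + 1) a)
                - (∑ b, σ (M + 1) b * v (M + 1) b) * (∑ a, max (R M a) 0) := by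
              rw [Finset.sum_sub_distrib, ← Finset.sum_mul]
              ring
          _ = 0 := by rw [hC, div_mul_cancel₀ _ hS.ne']; ring
      · push_neg at hS
        have hsum : ∑ b, max (R M b) 0 = 0 :=
          le_antisymm hS (Finset.sum_nonneg fun b _ => le_max_right _ _)
        have h0 := (Finset.sum_eq_zero_iff_of_nonneg
          (fun b _ => le_max_right (R M b) 0)).1 hsum
        refine Finset.sum_eq_zero fun a _ => ?_
        rw [h0 a (Finset.mem_univ a)]; ring
    have hRs := hRrec (M + 1) (by omega)
    simp only [Nat.add_sub_cancel] at hRs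
    have hstep : ∑ a, (max (R (M + 1) a) 0) ^ 2
        ≤ ∑ a, (max (R M a) 0) ^ 2 + ∑ a, (r (M + 1) a) ^ 2 := by
      have hle : ∑ a, (max (R (M + 1) a) 0) ^ 2
          ≤ ∑ a, ((max (R M a) 0) ^ 2 + 2 * (max (R M a) 0 * r (M + 1) a)
              + (r (M + 1) a) ^ 2) := by
        refine Finset.sum_le_sum fun a _ => ?_
        rw [hRs a]
        rcases le_or_gt (R M a + r (M + 1) a) 0 with h | h
        · rw [max_eq_right h]
          nlinarith [sq_nonneg (max (R M a) 0 + r (M + 1) a)]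
        · rw [max_eq_left h.le]
          nlinarith [le_max_left (R M a) 0, le_max_right (R M a) 0]
      have heq : ∑ a, ((max (R M a) 0) ^ 2 + 2 * (max (R M a) 0 * r (M + 1) a)
              + (r (M + 1) a) ^ 2)
          = ∑ a, (max (R M a) 0) ^ 2
            + 2 * ∑ a, max (R M a) 0 * r (M + 1) a
            + ∑ a, (r (M + 1) a) ^ 2 := by
        rw [Finset.sum_add_distrib, Finset.sum_add_distrib, Finset.mul_sum]
      rw [heq, hkey] at hle
      linarith
    rw [Finset.sum_Icc_succ_top (by omega : 1 ≤ M + 1)]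
    linarith
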